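/- arXiv:1210.3664 — 5 statements merged into one kernel-verified Lean document; each statement's English description precedes it below -/
import Mathlib

section
/- Let d, k, t be integers with 1 ≤ k ≤ d and t ≥ 1, and let u_0, …, u_{g−1} be a repair-group configuration for (k,t). Then, with the minimum-bandwidth cooperative regenerating (MBCR) normalization β = 2, β' = 1, α = 2d + t − 1, the cut-set value satisfies, for every such configuration, Σ_{i=0}^{g−1} u_i · min( 2d + t − 1 , 2(d − s_i) + (t − u_i) ) = k(2d + t − k). In particular the min-cut file size bound at the MBCR point is exactly M = k(2d + t − k). -/
private lemma mbcr_aux (d t : ℤ) (g : ℕ) (v : ℕ → ℤ) :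
    ∑ i ∈ Finset.range g, v i * (2 * (d - ∑ j ∈ Finset.range i, v j) + (t - v i))
      = (∑ i ∈ Finset.range g, v i) * (2 * d + t)
        - (∑ i ∈ Finset.range g, v i) ^ 2 := by
  induction g with
  | zero => simp
  | succ n ih =>
      rw [Finset.sum_range_succ, Finset.sum_range_succ, ih]
      ring

/-- At the MBCR point (`β = 2`, `β' = 1`, `α = 2d + t - 1`), the cut-set value of every
repair-group configuration `u₀, …, u_{g-1}` for `(k, t)` equals `k (2d + t - k)`. -/
theorem mbcr_cutset_value (d k t : ℤ) (hk : 1 ≤ k) (hkd : k ≤ d) (ht : 1 ≤ t)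
    (g : ℕ) (u : Fin g → ℤ)
    (hu : ∀ i, 1 ≤ u i ∧ u i ≤ t)
    (hsum : ∑ i, u i = k) :
    ∑ i : Fin g, u i *
        min (2 * d + t - 1)
          (2 * (d - ∑ j : Fin g, if (j : ℕ) < (i : ℕ) then u j else 0) + (t - u i)) =
      k * (2 * d + t - k) := by
  set v : ℕ → ℤ := fun n => if h : n < g then u ⟨n, h⟩ else 0 with hv
  have hvi : ∀ i : Fin g, v (i : ℕ) = u i := by
    intro i; simp [hv, i.isLt]
  have hS : ∀ i : Fin g,
      (∑ j : Fin g, if (j : ℕ) < (i : ℕ) then u j else 0)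
        = ∑ j ∈ Finset.range (i : ℕ), v j := by
    intro i
    have : (∑ j : Fin g, if (j : ℕ) < (i : ℕ) then u j else 0)
        = ∑ j ∈ Finset.range g, (if j < (i : ℕ) then v j else 0) := by
      rw [← Fin.sum_univ_eq_sum_range (fun n => if n < (i : ℕ) then v n else 0) g]
      apply Finset.sum_congr rfl
      intro j _
      by_cases h : (j : ℕ) < (i : ℕ) <;> simp [h, hvi j]
    rw [this, ← Finset.sum_subset (Finset.range_subset_range.2 (le_of_lt i.isLt))]
    · exact Finset.sum_congr rfl (fun n hn => by simp [Finset.mem_range.1 hn])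
    · intro n _ hn
      simp only [Finset.mem_range, not_lt] at hn
      rw [if_neg (by omega)]
  have hmin : ∀ i : Fin g,
      min (2 * d + t - 1)
          (2 * (d - ∑ j : Fin g, if (j : ℕ) < (i : ℕ) then u j else 0) + (t - u i))
        = 2 * (d - ∑ j : Fin g, if (j : ℕ) < (i : ℕ) then u j else 0) + (t - u i) := by
    intro i
    have hs : (0 : ℤ) ≤ ∑ j : Fin g, if (j : ℕ) < (i : ℕ) then u j else 0 := by
      apply Finset.sum_nonneg
      intro j _
      by_cases h : (j : ℕ) < (i : ℕ) <;> simp [h]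
      linarith [(hu j).1]
    apply min_eq_right
    linarith [(hu i).1]
  have hvk : ∑ i ∈ Finset.range g, v i = k := by
    rw [← hsum, ← Fin.sum_univ_eq_sum_range v g]
    exact Finset.sum_congr rfl (fun i _ => hvi i)
  calc ∑ i : Fin g, u i *
        min (2 * d + t - 1)
          (2 * (d - ∑ j : Fin g, if (j : ℕ) < (i : ℕ) then u j else 0) + (t - u i))
      = ∑ i ∈ Finset.range g, v i * (2 * (d - ∑ j ∈ Finset.range i, v j) + (t - v i)) := by
        rw [← Fin.sum_univ_eq_sum_range
          (fun n => v n * (2 * (d - ∑ j ∈ Finset.range n, v j) + (t - v n))) g]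
        apply Finset.sum_congr rfl
        intro i _
        rw [hmin i, hS i, hvi i]
    _ = k * (2 * d + t - k) := by
        rw [mbcr_aux, hvk]; ring
end

section
/- Let d, k, t, ℓ be integers with 1 ≤ k ≤ d, t ≥ 1 and 0 ≤ ℓ ≤ k. Let u_0, …, u_{g−1} be a repair-group configuration for (k,t), and let l_0, …, l_{g−1} be integers with 0 ≤ l_i ≤ u_i for all i and Σ_{i=0}^{g−1} l_i = ℓ. Then, with the MBCR normalization β = 2, β' = 1, α = 2d + t − 1, the eavesdropper-discounted cut-set value satisfies Σ_{i=0}^{g−1} (u_i − l_i) · min( 2d + t − 1 , 2(d − s_i) + (t − u_i) ) ≥ (k − ℓ)(2d + t − k − ℓ). This is the arithmetic core of Proposition 1: every cooperative regenerating code at the MBCR point with secure file size M^s against ℓ storage-observing eavesdroppers satisfies M^s ≤ (k − ℓ)(2d + t − k − ℓ). -/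
open Finset

/-- At the MBCR point (`β = 2`, `β' = 1`, `α = 2d + t - 1`), the eavesdropper-discounted
cut-set value of every repair-group configuration `u₀, …, u_{g-1}` for `(k, t)` with
eavesdropper allocation `l₀, …, l_{g-1}` summing to `L` is at least
`(k - L) (2d + t - k - L)`. -/
theorem mbcr_secure_cutset_lower_bound (d k t L : ℤ) (hk : 1 ≤ k) (hkd : k ≤ d) (ht : 1 ≤ t)
    (hL0 : 0 ≤ L) (hLk : L ≤ k)
    (g : ℕ) (u l : Fin g → ℤ)
    (hu : ∀ i, 1 ≤ u i ∧ u i ≤ t)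
    (husum : ∑ i, u i = k)
    (hl : ∀ i, 0 ≤ l i ∧ l i ≤ u i)
    (hlsum : ∑ i, l i = L) :
    (k - L) * (2 * d + t - k - L) ≤
      ∑ i : Fin g, (u i - l i) *
        min (2 * d + t - 1)
          (2 * (d - ∑ j : Fin g, if (j : ℕ) < (i : ℕ) then u j else 0) + (t - u i)) := by
  classical
  set u' : ℕ → ℤ := fun n => if h : n < g then u ⟨n, h⟩ else 0 with hu'def
  set l' : ℕ → ℤ := fun n => if h : n < g then l ⟨n, h⟩ else 0 with hl'def
  have hu'eq : ∀ j : Fin g, u' (j : ℕ) = u j := by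
    intro j; simp [hu'def, j.isLt]
  have hl'eq : ∀ j : Fin g, l' (j : ℕ) = l j := by
    intro j; simp [hl'def, j.isLt]
  have hu'pos : ∀ n, n < g → 1 ≤ u' n := by
    intro n hn
    have := hu'eq ⟨n, hn⟩
    simp only [Fin.val_mk] at this
    rw [this]; exact (hu ⟨n, hn⟩).1
  have hl'nonneg : ∀ n, 0 ≤ l' n := by
    intro n
    by_cases hn : n < g
    · have := hl'eq ⟨n, hn⟩
      simp only [Fin.val_mk] at this
      rw [this]; exact (hl ⟨n, hn⟩).1
    · simp [hl'def, hn]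
  have hl'le : ∀ n, n < g → l' n ≤ u' n := by
    intro n hn
    have h1 := hl'eq ⟨n, hn⟩
    have h2 := hu'eq ⟨n, hn⟩
    simp only [Fin.val_mk] at h1 h2
    rw [h1, h2]; exact (hl ⟨n, hn⟩).2
  set S : ℕ → ℤ := fun n => ∑ j ∈ range n, u' j with hSdef
  set V : ℕ → ℤ := fun n => ∑ j ∈ range n, (u' j - l' j) with hVdef
  set Λ : ℕ → ℤ := fun n => ∑ j ∈ range n, l' j with hΛdef
  have hVg : V g = k - L := by
    simp only [hVdef]
    rw [← Fin.sum_univ_eq_sum_range (fun n => u' n - l' n) g]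
    simp only [hu'eq, hl'eq]
    rw [Finset.sum_sub_distrib, husum, hlsum]
  have hΛg : Λ g = L := by
    simp only [hΛdef]
    rw [← Fin.sum_univ_eq_sum_range (fun n => l' n) g]
    simp only [hl'eq]
    exact hlsum
  have hSnonneg : ∀ n, n ≤ g → 0 ≤ S n := by
    intro n hn
    simp only [hSdef]
    apply Finset.sum_nonneg
    intro j hj
    exact le_trans zero_le_one (hu'pos j (lt_of_lt_of_le (mem_range.mp hj) hn))
  -- rewrite the goal sum into range form with the min resolved
  have hs : ∀ i : Fin g,
      (∑ j : Fin g, if (j : ℕ) < (i : ℕ) then u j else 0) = S (i : ℕ) := by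
    intro i
    have e1 : (∑ j : Fin g, if (j : ℕ) < (i : ℕ) then u j else 0)
        = ∑ n ∈ range g, (if n < (i : ℕ) then u' n else 0) := by
      rw [← Fin.sum_univ_eq_sum_range (fun n => if n < (i : ℕ) then u' n else 0) g]
      exact Finset.sum_congr rfl (fun j _ => by rw [hu'eq])
    rw [e1]
    rw [← Finset.sum_subset (Finset.range_subset_range.2 i.isLt.le)
      (fun x _ hx => by simp [mem_range] at hx; simp [if_neg (by omega : ¬ x < (i:ℕ))])]
    simp only [hSdef]
    exact Finset.sum_congr rfl (fun n hn => if_pos (mem_range.mp hn))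
  have key : (∑ i : Fin g, (u i - l i) *
        min (2 * d + t - 1)
          (2 * (d - ∑ j : Fin g, if (j : ℕ) < (i : ℕ) then u j else 0) + (t - u i)))
      = ∑ n ∈ range g, (u' n - l' n) * (2 * (d - S n) + (t - u' n)) := by
    rw [← Fin.sum_univ_eq_sum_range (fun n => (u' n - l' n) * (2 * (d - S n) + (t - u' n))) g]
    apply Finset.sum_congr rfl
    intro i _
    rw [hs i, hu'eq, hl'eq]
    congr 1
    apply min_eq_right
    have h1 : 0 ≤ S (i : ℕ) := hSnonneg _ i.isLt.le
    have h2 : 1 ≤ u i := (hu i).1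
    linarith
  rw [key]
  calc (k - L) * (2 * d + t - k - L)
      = ∑ n ∈ range g, ((2 * d + t - 2 * L) * (u' n - l' n) - (V (n+1) ^ 2 - V n ^ 2)) := by
        rw [Finset.sum_sub_distrib, ← Finset.mul_sum,
          Finset.sum_range_sub (fun n => V n ^ 2)]
        have h0 : V 0 = 0 := by simp [hVdef]
        have hsum : ∑ n ∈ range g, (u' n - l' n) = V g := rfl
        rw [hsum, hVg, h0]
        ring
    _ ≤ ∑ n ∈ range g, (u' n - l' n) * (2 * (d - S n) + (t - u' n)) := by
        apply Finset.sum_le_sum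
        intro i hi
        have hig : i < g := mem_range.mp hi
        have h1 : V (i + 1) = V i + (u' i - l' i) := Finset.sum_range_succ _ i
        have h2 : Λ (i + 1) = Λ i + l' i := Finset.sum_range_succ _ i
        have h3 : S i = V i + Λ i := by
          simp only [hSdef, hVdef, hΛdef, ← Finset.sum_add_distrib]
          exact Finset.sum_congr rfl (fun j _ => by ring)
        have h4 : Λ (i + 1) ≤ L := by
          rw [← hΛg]
          exact Finset.sum_le_sum_of_subset_of_nonneg (Finset.range_subset_range.2 hig)
            (fun j _ _ => hl'nonneg j)
        have h5 : 0 ≤ l' i := hl'nonneg i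
        have h6 : 0 ≤ u' i - l' i := by linarith [hl'le i hig]
        have h7 : 0 ≤ (u' i - l' i) * (L - Λ (i + 1)) :=
          mul_nonneg h6 (by linarith)
        have h8 : 0 ≤ (u' i - l' i) * (L - Λ i) :=
          mul_nonneg h6 (by linarith)
        have h7' : 0 ≤ (u' i - l' i) * (L - (Λ i + l' i)) := h2 ▸ h7
        rw [h1, h3]
        nlinarith [h7', h8]
end

section
/- Let d, t, a, b, k, ℓ be integers with t ≥ 1, a ≥ 1, 0 ≤ b < t, k = a·t + b, d ≥ k, and 0 ≤ ℓ ≤ a·t. Write ã = ⌊ℓ/t⌋. Then the maximum of Σ_{i=0}^{a−1} 2·l_i·(d − i·t) + l_a·( 2(d − a·t) + (t − b) ), taken over all integer tuples (l_0, …, l_a) with 0 ≤ l_i ≤ t for every i and Σ_{i=0}^{a} l_i = ℓ, equals 2ℓ(d − ã·t) + t²·ã·(ã + 1). -/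
open Finset

/-- Abel summation by parts for integer sequences. -/
lemma abel_sum (c x : ℕ → ℤ) : ∀ n : ℕ,
    ∑ i ∈ range (n+1), c i * x i =
      (∑ j ∈ range n, (c j - c (j+1)) * ∑ i ∈ range (j+1), x i)
        + c n * ∑ i ∈ range (n+1), x i := by
  intro n
  induction n with
  | zero => simp
  | succ n ih =>
    rw [sum_range_succ (fun i => c i * x i) (n+1), ih,
      sum_range_succ (fun j => (c j - c (j+1)) * ∑ i ∈ range (j+1), x i)]
    rw [sum_range_succ x (n+1)]
    ring

lemma sum_lin (d t : ℤ) (m : ℕ) :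
    ∑ i ∈ range m, 2*(d - (i:ℤ)*t)*t = (m:ℤ)*(2*d*t) - (m:ℤ)*((m:ℤ)-1)*t^2 := by
  induction m with
  | zero => simp
  | succ n ih => rw [sum_range_succ, ih]; push_cast; ring

/-- The coefficient of `l i` in the objective. -/
def mbcrC (d t b : ℤ) (a : ℕ) : ℕ → ℤ :=
  fun i => if i = a then 2*(d - (a:ℤ)*t) + (t - b) else 2*(d - (i:ℤ)*t)

/-- The greedy allocation. -/
def mbcrG (L t : ℤ) : ℕ → ℤ := fun i => max 0 (min t (L - (i:ℤ)*t))

lemma greedy_prefix (L t : ℤ) (hL0 : 0 ≤ L) (ht : 1 ≤ t) (n : ℕ) :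
    ∑ i ∈ range n, mbcrG L t i = min L ((n:ℤ)*t) := by
  induction n with
  | zero => simp; omega
  | succ n ih =>
    rw [sum_range_succ, ih]
    show min L ((n:ℤ)*t) + max 0 (min t (L - (n:ℤ)*t)) = _
    have h : ((n+1:ℕ):ℤ)*t = (n:ℤ)*t + t := by push_cast; ring
    rw [h]
    generalize (n:ℤ)*t = N
    omega

lemma mbcrC_mono (d t b : ℤ) (a : ℕ) (ht : 1 ≤ t) (hb0 : 0 ≤ b)
    (j : ℕ) (hj : j < a) :
    0 ≤ mbcrC d t b a j - mbcrC d t b a (j+1) := by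
  unfold mbcrC
  rw [if_neg (by omega : j ≠ a)]
  by_cases h : j + 1 = a
  · rw [if_pos h]
    have ha' : (a:ℤ) = (j:ℤ) + 1 := by exact_mod_cast h.symm
    rw [ha']
    have : 2*(d-(j:ℤ)*t) - (2*(d-((j:ℤ)+1)*t) + (t-b)) = t + b := by ring
    linarith
  · rw [if_neg h]
    push_cast
    have : 2*(d-(j:ℤ)*t) - 2*(d-((j:ℤ)+1)*t) = 2*t := by ring
    linarith

/-- Value of the greedy allocation. -/
lemma mbcr_value (d t b L : ℤ) (a : ℕ) (ht : 1 ≤ t)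
    (hL0 : 0 ≤ L) (hLat : L ≤ (a:ℤ)*t) :
    ∑ i ∈ range (a+1), mbcrC d t b a i * mbcrG L t i
      = 2*L*(d - (L/t)*t) + t^2*(L/t)*(L/t+1) := by
  have ht0 : (0:ℤ) < t := by linarith
  have hq0 : 0 ≤ L / t := Int.ediv_nonneg hL0 (le_of_lt ht0)
  set m : ℕ := (L/t).toNat with hmdef
  have hm : (m:ℤ) = L / t := Int.toNat_of_nonneg hq0
  have h1 : 0 ≤ L % t := Int.emod_nonneg L (by linarith)
  have h2 : L % t < t := Int.emod_lt_of_pos L ht0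
  have h3 : L % t + t * (L / t) = L := Int.emod_add_mul_ediv L t
  have hml : (m:ℤ)*t = t*(L/t) := by rw [hm]; ring
  have hmt : (m:ℤ)*t ≤ L := by linarith
  have hmt2 : L < ((m:ℤ)+1)*t := by
    have e : ((m:ℤ)+1)*t = (m:ℤ)*t + t := by ring
    rw [e]; linarith
  have hma : m ≤ a := by
    by_contra hcon
    push_neg at hcon
    have h4 : ((a:ℤ)+1) ≤ (m:ℤ) := by exact_mod_cast hcon
    have h5 : ((a:ℤ)+1)*t ≤ (m:ℤ)*t := mul_le_mul_of_nonneg_right h4 (le_of_lt ht0)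
    have h6 : ((a:ℤ)+1)*t = (a:ℤ)*t + t := by ring
    linarith
  rw [range_eq_Ico, ← sum_Ico_consecutive (fun i => mbcrC d t b a i * mbcrG L t i)
      (Nat.zero_le m) (show m ≤ a+1 by omega), ← range_eq_Ico]
  have hIco : ∑ i ∈ Ico m (a+1), mbcrC d t b a i * mbcrG L t i
      = 2*(d - (m:ℤ)*t)*(L - (m:ℤ)*t) := by
    rw [Finset.sum_eq_single_of_mem m (by rw [mem_Ico]; omega)]
    · have hgm : mbcrG L t m = L - (m:ℤ)*t := by
        unfold mbcrG
        rw [min_eq_right (by linarith), max_eq_right (by linarith)]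
      rw [hgm]
      by_cases hma' : m = a
      · subst hma'
        have hz : L - (m:ℤ)*t = 0 := by linarith
        rw [hz, mul_zero, mul_zero]
      · unfold mbcrC; rw [if_neg hma']
    · intro i hi hne
      rw [mem_Ico] at hi
      have h4 : ((m:ℤ)+1) ≤ (i:ℤ) := by exact_mod_cast (show m + 1 ≤ i by omega)
      have h5 : ((m:ℤ)+1)*t ≤ (i:ℤ)*t := mul_le_mul_of_nonneg_right h4 (le_of_lt ht0)
      have hz : mbcrG L t i = 0 := by
        unfold mbcrG
        rw [min_eq_right (by linarith), max_eq_left (by linarith)]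
      rw [hz, mul_zero]
  have hfirst : ∑ i ∈ range m, mbcrC d t b a i * mbcrG L t i
      = ∑ i ∈ range m, 2*(d - (i:ℤ)*t)*t := by
    apply sum_congr rfl
    intro i hi
    rw [mem_range] at hi
    have hia : i ≠ a := by omega
    have hi1 : (i:ℤ) + 1 ≤ (m:ℤ) := by exact_mod_cast hi
    have h5 : ((i:ℤ)+1)*t ≤ (m:ℤ)*t := mul_le_mul_of_nonneg_right hi1 (le_of_lt ht0)
    have h6 : ((i:ℤ)+1)*t = (i:ℤ)*t + t := by ring
    have hgi : mbcrG L t i = t := by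
      unfold mbcrG
      rw [min_eq_left (by linarith), max_eq_right (by linarith)]
    unfold mbcrC
    rw [if_neg hia, hgi]
  rw [hfirst, sum_lin, hIco, ← hm]
  ring

/-- Worst-case eavesdropper allocation (equation (16) of the paper) at the MBCR
normalization `β = 2`, `β' = 1`, in the case `L ≤ a·t`: the maximum of
`∑_{i<a} 2 lᵢ (d - i t) + lₐ (2(d - a t) + (t - b))` over all allocations
`0 ≤ lᵢ ≤ t` with `∑ lᵢ = L` equals `2L(d - ⌊L/t⌋ t) + t² ⌊L/t⌋ (⌊L/t⌋ + 1)`. -/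
theorem mbcr_worst_case_eavesdropper_low (d t b k L : ℤ) (a : ℕ)
    (ht : 1 ≤ t) (ha : 1 ≤ a) (hb0 : 0 ≤ b) (hbt : b < t)
    (hk : k = (a : ℤ) * t + b) (hd : k ≤ d)
    (hL0 : 0 ≤ L) (hLat : L ≤ (a : ℤ) * t) :
    IsGreatest
      { S : ℤ | ∃ l : Fin (a + 1) → ℤ,
          (∀ i, 0 ≤ l i ∧ l i ≤ t) ∧ (∑ i, l i = L) ∧
          S = (∑ i : Fin a, 2 * l i.castSucc * (d - ((i : ℕ) : ℤ) * t)) +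
              l (Fin.last a) * (2 * (d - (a : ℤ) * t) + (t - b)) }
      (2 * L * (d - (L / t) * t) + t ^ 2 * (L / t) * (L / t + 1)) := by
  constructor
  · -- membership: the greedy allocation
    refine ⟨fun i => mbcrG L t (i : ℕ), ?_, ?_, ?_⟩
    · intro i
      exact ⟨le_max_left _ _, max_le (by linarith) (min_le_left _ _)⟩
    · rw [Fin.sum_univ_eq_sum_range (fun i => mbcrG L t i) (a+1),
        greedy_prefix L t hL0 ht]
      have e : ((a+1:ℕ):ℤ)*t = (a:ℤ)*t + t := by push_cast; ring
      rw [e]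
      exact min_eq_left (by linarith)
    · rw [← mbcr_value d t b L a ht hL0 hLat,
        sum_range_succ (fun i => mbcrC d t b a i * mbcrG L t i) a]
      congr 1
      · rw [← Fin.sum_univ_eq_sum_range (fun i => mbcrC d t b a i * mbcrG L t i) a]
        apply Finset.sum_congr rfl
        intro i _
        have hia : (i:ℕ) ≠ a := by have := i.isLt; omega
        simp only [Fin.coe_castSucc, mbcrC, if_neg hia]
        ring
      · have hca : mbcrC d t b a a = 2*(d - (a:ℤ)*t) + (t - b) := by
          unfold mbcrC; rw [if_pos rfl]
        simp only [Fin.val_last, hca]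
        ring
  · rintro S ⟨l, hl, hsum, rfl⟩
    set l' : ℕ → ℤ := fun i => if h : i < a + 1 then l ⟨i, h⟩ else 0 with hl'
    have hl'0 : ∀ i, 0 ≤ l' i := by
      intro i; simp only [hl']; split
      · exact (hl _).1
      · exact le_refl 0
    have hl't : ∀ i, l' i ≤ t := by
      intro i; simp only [hl']; split
      · exact (hl _).2
      · linarith
    have hl'sum : ∑ i ∈ range (a+1), l' i = L := by
      rw [← Fin.sum_univ_eq_sum_range l' (a+1), ← hsum]
      apply Finset.sum_congr rfl
      intro i _
      simp only [hl']
      rw [dif_pos i.isLt]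
    have hS : (∑ i : Fin a, 2 * l i.castSucc * (d - ((i:ℕ):ℤ)*t))
          + l (Fin.last a) * (2*(d - (a:ℤ)*t) + (t-b))
        = ∑ i ∈ range (a+1), mbcrC d t b a i * l' i := by
      rw [sum_range_succ (fun i => mbcrC d t b a i * l' i) a]
      congr 1
      · rw [← Fin.sum_univ_eq_sum_range (fun i => mbcrC d t b a i * l' i) a]
        apply Finset.sum_congr rfl
        intro i _
        have hia : (i:ℕ) ≠ a := by have := i.isLt; omega
        have hlt : (i:ℕ) < a + 1 := by have := i.isLt; omega
        have hcs : i.castSucc = (⟨(i:ℕ), hlt⟩ : Fin (a+1)) := by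
          apply Fin.ext; rfl
        simp only [hl', mbcrC, if_neg hia, dif_pos hlt, hcs]
        ring
      · have hlast : Fin.last a = (⟨a, by omega⟩ : Fin (a+1)) := by
          apply Fin.ext; rfl
        have hca : mbcrC d t b a a = 2*(d - (a:ℤ)*t) + (t - b) := by
          unfold mbcrC; rw [if_pos rfl]
        simp only [hl', hca, dif_pos (show a < a + 1 by omega), hlast]
        ring
    rw [hS, abel_sum (mbcrC d t b a) l' a, hl'sum]
    have htar : 2*L*(d - (L/t)*t) + t^2*(L/t)*(L/t+1)
        = (∑ j ∈ range a, (mbcrC d t b a j - mbcrC d t b a (j+1)) * min L (((j:ℤ)+1)*t))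
          + mbcrC d t b a a * L := by
      rw [← mbcr_value d t b L a ht hL0 hLat,
        abel_sum (mbcrC d t b a) (mbcrG L t) a]
      congr 1
      · apply Finset.sum_congr rfl
        intro j _
        rw [greedy_prefix L t hL0 ht (j+1)]
        norm_num
      · rw [greedy_prefix L t hL0 ht (a+1)]
        have e : ((a+1:ℕ):ℤ)*t = (a:ℤ)*t + t := by push_cast; ring
        rw [e, min_eq_left (by linarith)]
    rw [htar]
    apply add_le_add_left
    apply Finset.sum_le_sum
    intro j hj
    rw [mem_range] at hj
    apply mul_le_mul_of_nonneg_left ?_ (mbcrC_mono d t b a ht hb0 j hj)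
    apply le_min
    · have hsplit : ∑ i ∈ range (j+1), l' i + ∑ i ∈ Ico (j+1) (a+1), l' i
          = ∑ i ∈ range (a+1), l' i := by
        rw [range_eq_Ico, sum_Ico_consecutive _ (Nat.zero_le _) (by omega), ← range_eq_Ico]
      rw [hl'sum] at hsplit
      have hnn : 0 ≤ ∑ i ∈ Ico (j+1) (a+1), l' i :=
        Finset.sum_nonneg (fun i _ => hl'0 i)
      linarith
    · calc ∑ i ∈ range (j+1), l' i ≤ ∑ _i ∈ range (j+1), t :=
            Finset.sum_le_sum (fun i _ => hl't i)
        _ = ((j:ℤ)+1)*t := by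
            rw [Finset.sum_const, Finset.card_range]
            push_cast
            ring
end

section
/- Let d, t, a, b, k, ℓ be integers with t ≥ 1, a ≥ 1, 0 ≤ b < t, k = a·t + b, d ≥ k, and a·t ≤ ℓ ≤ k. Then the maximum of Σ_{i=0}^{a−1} 2·l_i·(d − i·t) + l_a·( 2(d − a·t) + (t − b) ), taken over all integer tuples (l_0, …, l_a) with 0 ≤ l_i ≤ t for every i and Σ_{i=0}^{a} l_i = ℓ, equals 2ℓ(d − a·t) + t²·a·(a + 1) + (ℓ − a·t)(t − b). -/
private lemma gauss_fin (n : ℕ) : (∑ i : Fin n, ((i : ℕ) : ℤ)) * 2 = (n : ℤ) * ((n : ℤ) - 1) := by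
  induction n with
  | zero => simp
  | succ n ih =>
    rw [Fin.sum_univ_castSucc]
    push_cast
    simp only [Fin.coe_castSucc, Fin.val_last]
    push_cast
    linear_combination ih

private lemma sum_const_lin (d t : ℤ) (a : ℕ) :
    ∑ i : Fin a, 2 * t * (d - ((i : ℕ) : ℤ) * t)
      = 2 * (a : ℤ) * t * d - t ^ 2 * ((a : ℤ) * ((a : ℤ) - 1)) := by
  have hg := gauss_fin a
  calc ∑ i : Fin a, 2 * t * (d - ((i : ℕ) : ℤ) * t)
      = ∑ i : Fin a, (2 * t * d - t ^ 2 * 2 * ((i : ℕ) : ℤ)) :=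
        Finset.sum_congr rfl (fun i _ => by ring)
    _ = (a : ℤ) * (2 * t * d) - t ^ 2 * 2 * (∑ i : Fin a, ((i : ℕ) : ℤ)) := by
        rw [Finset.sum_sub_distrib, Finset.sum_const, Finset.card_univ, Fintype.card_fin,
          ← Finset.mul_sum, nsmul_eq_mul]
    _ = 2 * (a : ℤ) * t * d - t ^ 2 * ((a : ℤ) * ((a : ℤ) - 1)) := by
        linear_combination (-(t ^ 2) : ℤ) * hg

/-- Worst-case eavesdropper allocation (equation (16) of the paper) at the MBCR
normalization `β = 2`, `β' = 1`, in the case `a·t ≤ L ≤ k`: the maximum of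
`∑_{i<a} 2 lᵢ (d - i t) + lₐ (2(d - a t) + (t - b))` over all allocations
`0 ≤ lᵢ ≤ t` with `∑ lᵢ = L` equals `2L(d - a t) + t² a (a + 1) + (L - a t)(t - b)`. -/
theorem mbcr_worst_case_eavesdropper_high (d t b k L : ℤ) (a : ℕ)
    (ht : 1 ≤ t) (ha : 1 ≤ a) (hb0 : 0 ≤ b) (hbt : b < t)
    (hk : k = (a : ℤ) * t + b) (hd : k ≤ d)
    (hatL : (a : ℤ) * t ≤ L) (hLk : L ≤ k) :
    IsGreatest
      { S : ℤ | ∃ l : Fin (a + 1) → ℤ,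
          (∀ i, 0 ≤ l i ∧ l i ≤ t) ∧ (∑ i, l i = L) ∧
          S = (∑ i : Fin a, 2 * l i.castSucc * (d - ((i : ℕ) : ℤ) * t)) +
              l (Fin.last a) * (2 * (d - (a : ℤ) * t) + (t - b)) }
      (2 * L * (d - (a : ℤ) * t) + t ^ 2 * a * ((a : ℤ) + 1) + (L - (a : ℤ) * t) * (t - b)) := by
  have h1 := sum_const_lin d t a
  constructor
  · -- membership
    refine ⟨fun i => if (i : ℕ) < a then t else L - (a : ℤ) * t, fun i => ?_, ?_, ?_⟩
    · by_cases h : (i : ℕ) < a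
      · simp only [h, if_true]
        exact ⟨by linarith, le_refl t⟩
      · simp only [h, if_false]
        constructor
        · linarith
        · rw [hk] at hLk; linarith
    · rw [Fin.sum_univ_castSucc]
      have hcs : ∀ i : Fin a, (if ((i.castSucc : Fin (a+1)) : ℕ) < a then t else L - (a : ℤ) * t) = t := by
        intro i
        simp [Fin.coe_castSucc, i.isLt]
      rw [Finset.sum_congr rfl (fun i _ => hcs i)]
      simp [Fin.val_last, Finset.sum_const]
    · have hcs : ∀ i : Fin a,
          2 * (if ((i.castSucc : Fin (a+1)) : ℕ) < a then t else L - (a : ℤ) * t)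
            * (d - ((i : ℕ) : ℤ) * t) = 2 * t * (d - ((i : ℕ) : ℤ) * t) := by
        intro i
        simp [Fin.coe_castSucc, i.isLt]
      rw [Finset.sum_congr rfl (fun i _ => hcs i)]
      simp only [Fin.val_last, lt_irrefl, if_false]
      rw [h1]
      ring
  · -- upper bound
    rintro S ⟨l, hb, hsum, rfl⟩
    have hlast : l (Fin.last a) = L - ∑ i : Fin a, l i.castSucc := by
      rw [Fin.sum_univ_castSucc] at hsum
      linarith
    set ca : ℤ := 2 * (d - (a : ℤ) * t) + (t - b) with hca
    have hterm : ∀ i : Fin a,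
        0 ≤ (t - l i.castSucc) * (2 * (d - ((i : ℕ) : ℤ) * t) - ca) := by
      intro i
      apply mul_nonneg
      · have := (hb i.castSucc).2; linarith
      · have hi : ((i : ℕ) : ℤ) ≤ (a : ℤ) - 1 := by
          have := i.isLt
          have : ((i : ℕ) : ℤ) + 1 ≤ (a : ℤ) := by exact_mod_cast this
          linarith
        have h2 : (1 : ℤ) ≤ (a : ℤ) - ((i : ℕ) : ℤ) := by linarith
        have h3 : (1 : ℤ) * t ≤ ((a : ℤ) - ((i : ℕ) : ℤ)) * t := by
          apply mul_le_mul_of_nonneg_right h2 (by linarith)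
        rw [hca]
        nlinarith
    have hsum0 : 0 ≤ ∑ i : Fin a, (t - l i.castSucc) * (2 * (d - ((i : ℕ) : ℤ) * t) - ca) :=
      Finset.sum_nonneg fun i _ => hterm i
    have expand : ∑ i : Fin a, (t - l i.castSucc) * (2 * (d - ((i : ℕ) : ℤ) * t) - ca)
        = (∑ i : Fin a, 2 * t * (d - ((i : ℕ) : ℤ) * t)) - (a : ℤ) * (t * ca)
          - (∑ i : Fin a, 2 * l i.castSucc * (d - ((i : ℕ) : ℤ) * t))
          + (∑ i : Fin a, l i.castSucc) * ca := by
      calc ∑ i : Fin a, (t - l i.castSucc) * (2 * (d - ((i : ℕ) : ℤ) * t) - ca)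
          = ∑ i : Fin a, (2 * t * (d - ((i : ℕ) : ℤ) * t) - t * ca
              - 2 * l i.castSucc * (d - ((i : ℕ) : ℤ) * t) + l i.castSucc * ca) :=
            Finset.sum_congr rfl (fun i _ => by ring)
        _ = _ := by
            rw [Finset.sum_add_distrib, Finset.sum_sub_distrib, Finset.sum_sub_distrib,
              Finset.sum_const, Finset.card_univ, Fintype.card_fin, nsmul_eq_mul,
              ← Finset.sum_mul]
    have hT : 2 * L * (d - (a : ℤ) * t) + t ^ 2 * a * ((a : ℤ) + 1) + (L - (a : ℤ) * t) * (t - b)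
        = (∑ i : Fin a, 2 * t * (d - ((i : ℕ) : ℤ) * t)) - (a : ℤ) * (t * ca) + L * ca := by
      rw [h1, hca]
      ring
    rw [hlast, hT, sub_mul]
    rw [expand] at hsum0
    linarith
end

section
/- Let n, k, t, ℓ be integers with t ≥ 1, 0 ≤ ℓ < k, and k ≤ n − t (so that d = n − t ≥ k). Then the secrecy-normalized repair bandwidth at the MBCR point with t simultaneous repairs is at least that with single repairs: (2n − t − 1) / ( (k − ℓ)(2n − t − k − ℓ) ) ≥ (2n − 2) / ( (k − ℓ)(2n − 1 − k − ℓ) ). Moreover, if t ≥ 2 and k ≥ 2 the inequality is strict; equivalently, (2n − t − 1)(2n − 1 − k − ℓ) − (2n − 2)(2n − t − k − ℓ) = (t − 1)(k + ℓ − 1). -/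
/-- At the MBCR point with `L < k` eavesdropped nodes and `d = n - t`, the
secrecy-normalized repair bandwidth with `t` simultaneous repairs is at least that with
single repairs, strictly greater when `t ≥ 2` and `k ≥ 2`; the underlying integer
identity is `(2n-t-1)(2n-1-k-L) - (2n-2)(2n-t-k-L) = (t-1)(k+L-1)`. -/
theorem mbcr_secure_nrbw_cooperation (n k t L : ℤ) (ht : 1 ≤ t) (hL0 : 0 ≤ L)
    (hLk : L < k) (hkn : k ≤ n - t) :
    (2 * (n : ℝ) - t - 1) / (((k : ℝ) - L) * (2 * (n : ℝ) - t - k - L)) ≥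
        (2 * (n : ℝ) - 2) / (((k : ℝ) - L) * (2 * (n : ℝ) - 1 - k - L)) ∧
    (2 ≤ t → 2 ≤ k →
      (2 * (n : ℝ) - t - 1) / (((k : ℝ) - L) * (2 * (n : ℝ) - t - k - L)) >
        (2 * (n : ℝ) - 2) / (((k : ℝ) - L) * (2 * (n : ℝ) - 1 - k - L))) ∧
    (2 * n - t - 1) * (2 * n - 1 - k - L) - (2 * n - 2) * (2 * n - t - k - L) =
      (t - 1) * (k + L - 1) := by
  have ht' : (1:ℝ) ≤ t := by exact_mod_cast ht
  have hL0' : (0:ℝ) ≤ L := by exact_mod_cast hL0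
  have hLk' : (L:ℝ) < k := by exact_mod_cast hLk
  have hkn' : (k:ℝ) ≤ n - t := by exact_mod_cast hkn
  have hk1' : (1:ℝ) ≤ k := by exact_mod_cast (by omega : (1:ℤ) ≤ k)
  have hb1 : (0:ℝ) < ((k:ℝ) - L) * (2 * (n : ℝ) - t - k - L) := by nlinarith
  have hb2 : (0:ℝ) < ((k:ℝ) - L) * (2 * (n : ℝ) - 1 - k - L) := by nlinarith
  refine ⟨?_, ?_, by ring⟩
  · rw [ge_iff_le, div_le_div_iff₀ hb2 hb1]
    nlinarith [mul_nonneg (mul_nonneg (sub_pos.mpr hLk').le (by linarith : (0:ℝ) ≤ (t:ℝ) - 1)) (by linarith : (0:ℝ) ≤ (k:ℝ) + L - 1)]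
  · intro ht2 hk2
    have ht2' : (2:ℝ) ≤ t := by exact_mod_cast ht2
    have hk2' : (2:ℝ) ≤ k := by exact_mod_cast hk2
    rw [gt_iff_lt, div_lt_div_iff₀ hb2 hb1]
    nlinarith [mul_pos (mul_pos (sub_pos.mpr hLk') (by linarith : (0:ℝ) < (t:ℝ) - 1)) (by linarith : (0:ℝ) < (k:ℝ) + L - 1)]
end
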